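/- Let d ≥ 2 and T(x) = d·x mod 1 on 𝕋. Let X ⊂ 𝕋 be an infinite rotational proper subset with semiconjugacy Φ: X → [0,1] to rotation by irrational θ₀, and nodes 0 = t₀ < t₁ < ⋯ < t_ℓ = 1 as given by the images Φ(X ∩ I_k) of the intersections with the d-adic intervals. If ω ∈ [0,1] satisfies ω + nθ₀ ≢ t_i (mod 1) for all n ≥ 0 and all i, then Φ⁻¹(ω) is a singleton. -/

import Mathlib

open Set Filter MeasureTheory

noncomputable def rep (z : UnitAddCircle) : ℝ := (AddCircle.equivIco 1 0 z : ℝ)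

def MinimalOn (T : UnitAddCircle → UnitAddCircle) (X : Set UnitAddCircle) : Prop :=
  ∀ x ∈ X, ∀ y ∈ X, y ∈ closure {z : UnitAddCircle | ∃ n : ℕ, T^[n] x = z}

def PreservesCyclicOrder (T : UnitAddCircle → UnitAddCircle) (X : Set UnitAddCircle) : Prop :=
  ∀ p ∈ X, ∀ q ∈ X, ∀ r ∈ X,
    T p ≠ T q → T q ≠ T r → T r ≠ T p →
    sbtw p q r → sbtw (T p) (T q) (T r)

def IsRotational (T : UnitAddCircle → UnitAddCircle) (X : Set UnitAddCircle) : Prop :=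
  IsClosed X ∧ Set.MapsTo T X X ∧ MinimalOn T X ∧ PreservesCyclicOrder T X



lemma rep_coe (x : ℝ) : rep ((x : ℝ) : UnitAddCircle) = Int.fract x := by
  simp [rep, AddCircle.coe_equivIco_mk_apply]

lemma coe_rep (z : UnitAddCircle) : ((rep z : ℝ) : UnitAddCircle) = z :=
  (AddCircle.equivIco 1 0).symm_apply_apply z

lemma rep_inj {a b : UnitAddCircle} (h : rep a = rep b) : a = b := by
  rw [← coe_rep a, ← coe_rep b, h]

lemma rep_mem (z : UnitAddCircle) : rep z ∈ Set.Ico (0:ℝ) 1 := by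
  have := (AddCircle.equivIco 1 0 z).2
  simpa [rep] using this

lemma rep_nsmul (d : ℕ) (z : UnitAddCircle) : rep (d • z) = Int.fract (d * rep z) := by
  conv_lhs => rw [← coe_rep z, ← AddCircle.coe_nsmul, rep_coe]
  norm_num [nsmul_eq_mul]

-- circle equality for reals in [0,1]
lemma circle_eq_cases {s t : ℝ} (hs : s ∈ Set.Icc (0:ℝ) 1) (ht : t ∈ Set.Icc (0:ℝ) 1)
    (h : ((s : ℝ) : UnitAddCircle) = ((t : ℝ) : UnitAddCircle)) :
    s = t ∨ (s = 0 ∧ t = 1) ∨ (s = 1 ∧ t = 0) := by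
  have hf : Int.fract s = Int.fract t := by
    have := congrArg rep h
    rwa [rep_coe, rep_coe] at this
  rcases eq_or_lt_of_le hs.2 with h1 | h1
  · rcases eq_or_lt_of_le ht.2 with h2 | h2
    · exact Or.inl (h1.trans h2.symm)
    · right; right
      refine ⟨h1, ?_⟩
      rw [h1, Int.fract_one, Int.fract_eq_self.2 ⟨ht.1, h2⟩] at hf
      exact hf.symm
  · rcases eq_or_lt_of_le ht.2 with h2 | h2
    · right; left
      refine ⟨?_, h2⟩
      rw [h2, Int.fract_one, Int.fract_eq_self.2 ⟨hs.1, h1⟩] at hf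
      exact hf
    · left
      rw [Int.fract_eq_self.2 ⟨hs.1, h1⟩, Int.fract_eq_self.2 ⟨ht.1, h2⟩] at hf
      exact hf

theorem generic_fiber_singleton
    (d : ℕ) (hd : 2 ≤ d)
    (T : UnitAddCircle → UnitAddCircle) (hTdef : ∀ x : UnitAddCircle, T x = d • x)
    (X : Set UnitAddCircle) (hrot : IsRotational T X)
    (hinf : X.Infinite) (hproper : X ≠ Set.univ)
    (θ₀ : ℝ) (hθ : Irrational θ₀)
    (Φ : UnitAddCircle → ℝ)
    (hΦmono : ∀ x ∈ X, ∀ y ∈ X, rep x ≤ rep y → Φ x ≤ Φ y)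
    (hΦcont : ContinuousOn Φ X)
    (hΦsurj : Φ '' X = Set.Icc (0:ℝ) 1)
    (hsemi : ∀ x ∈ X,
      ((Φ (T x) : ℝ) : UnitAddCircle) = ((Φ x + θ₀ : ℝ) : UnitAddCircle))
    (N : Set ℝ)
    (hN : N = {0} ∪ ⋃ k : Fin d, {r : ℝ |
        ({x ∈ X | rep x ∈ Set.Icc ((k : ℝ) / d) (((k : ℝ) + 1) / d)}).Nonempty ∧
        r = sSup (Φ '' {x ∈ X | rep x ∈ Set.Icc ((k : ℝ) / d) (((k : ℝ) + 1) / d)})})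
    (ω : ℝ) (hω : ω ∈ Set.Icc (0:ℝ) 1)
    (hωgen : ∀ n : ℕ, ∀ r ∈ N,
      ((ω + n * θ₀ : ℝ) : UnitAddCircle) ≠ ((r : ℝ) : UnitAddCircle)) :
    ∃ a : UnitAddCircle, {x ∈ X | Φ x = ω} = {a} := by
  have hd0 : (0:ℝ) < d := by positivity
  have hmaps := hrot.2.1
  -- iterates stay in X
  have hiter : ∀ (z : UnitAddCircle), z ∈ X → ∀ n : ℕ, T^[n] z ∈ X := by
    intro z hz n
    induction n with
    | zero => simpa using hz
    | succ n ih => rw [Function.iterate_succ_apply']; exact hmaps ih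
  -- Φ values lie in [0,1]
  have hΦmem : ∀ z ∈ X, Φ z ∈ Set.Icc (0:ℝ) 1 := by
    intro z hz
    rw [← hΦsurj]; exact ⟨z, hz, rfl⟩
  -- circle-level orbit formula
  have horb : ∀ (z : UnitAddCircle), z ∈ X → Φ z = ω → ∀ n : ℕ,
      ((Φ (T^[n] z) : ℝ) : UnitAddCircle) = ((ω + n * θ₀ : ℝ) : UnitAddCircle) := by
    intro z hz hΦz n
    induction n with
    | zero => simp [hΦz]
    | succ n ih =>
      rw [Function.iterate_succ_apply']
      have h1 := hsemi (T^[n] z) (hiter z hz n)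
      rw [h1]
      have : ((Φ (T^[n] z) + θ₀ : ℝ) : UnitAddCircle)
          = ((Φ (T^[n] z) : ℝ) : UnitAddCircle) + ((θ₀ : ℝ) : UnitAddCircle) := by
        push_cast; rfl
      rw [this, ih]
      have : ((ω + (n+1 : ℕ) * θ₀ : ℝ) : UnitAddCircle)
          = ((ω + n * θ₀ : ℝ) : UnitAddCircle) + ((θ₀ : ℝ) : UnitAddCircle) := by
        rw [← AddCircle.coe_add]; push_cast; ring_nf
      rw [this]
  -- the key separation contradiction
  have hsep : ∀ n : ℕ, ∀ u ∈ X, ∀ v ∈ X,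
      ((Φ u : ℝ) : UnitAddCircle) = ((ω + n * θ₀ : ℝ) : UnitAddCircle) →
      ((Φ v : ℝ) : UnitAddCircle) = ((ω + n * θ₀ : ℝ) : UnitAddCircle) →
      ⌊d * rep u⌋ < ⌊d * rep v⌋ → False := by
    intro n u hu v hv hΦu hΦv hlt
    set k : ℤ := ⌊d * rep u⌋ with hk
    have hk0 : 0 ≤ k := by
      apply Int.floor_nonneg.2
      have := (rep_mem u).1; positivity
    have hkd : k < (d:ℤ) := by
      have h1 : (k:ℝ) ≤ d * rep u := Int.floor_le _
      have h2 : d * rep u < d := by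
        have := (rep_mem u).2
        calc (d:ℝ) * rep u < d * 1 := by
              apply mul_lt_mul_of_pos_left this hd0
          _ = d := mul_one _
      exact_mod_cast h1.trans_lt h2
    set kn : Fin d := ⟨k.toNat, by omega⟩ with hkn
    have hknR : ((kn : ℕ) : ℝ) = (k : ℝ) := by
      simp only [hkn]
      exact_mod_cast Int.toNat_of_nonneg hk0
    set S : Set UnitAddCircle :=
      {x ∈ X | rep x ∈ Set.Icc ((kn : ℝ) / d) (((kn : ℝ) + 1) / d)} with hS
    have huS : u ∈ S := by
      refine ⟨hu, ?_, ?_⟩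
      · rw [hknR]
        rw [div_le_iff₀ hd0]
        have := Int.floor_le (d * rep u)
        linarith [this]
      · rw [hknR]
        rw [le_div_iff₀ hd0]
        have := Int.lt_floor_add_one (d * rep u)
        linarith [this]
    have hvge : ((kn : ℝ) + 1) / d ≤ rep v := by
      rw [hknR, div_le_iff₀ hd0]
      have h1 : (k:ℝ) + 1 ≤ ((⌊d * rep v⌋ : ℤ) : ℝ) := by
        exact_mod_cast Int.add_one_le_of_lt hlt
      have h2 : ((⌊d * rep v⌋ : ℤ) : ℝ) ≤ d * rep v := Int.floor_le _
      linarith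
    have hSne : S.Nonempty := ⟨u, huS⟩
    have hbdd : BddAbove (Φ '' S) := by
      apply BddAbove.mono (Set.image_mono (f := Φ) (fun z hz => hz.1))
      rw [hΦsurj]; exact bddAbove_Icc
    have ht1 : Φ u ≤ sSup (Φ '' S) := le_csSup hbdd ⟨u, huS, rfl⟩
    have ht2 : sSup (Φ '' S) ≤ Φ v := by
      apply csSup_le (hSne.image Φ)
      rintro c ⟨z, hz, rfl⟩
      exact hΦmono z hz.1 v hv (hz.2.2.trans hvge)
    have hcases := circle_eq_cases (hΦmem u hu) (hΦmem v hv) (hΦu.trans hΦv.symm)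
    have hmemN : ∀ r : ℝ, r = sSup (Φ '' S) → r ∈ N := by
      intro r hr
      rw [hN]
      right
      exact Set.mem_iUnion.2 ⟨kn, hSne, hr⟩
    have h10 : ((1 : ℝ) : UnitAddCircle) = ((0:ℝ) : UnitAddCircle) := by
      rw [AddCircle.coe_period]; norm_num
    rcases hcases with heq | ⟨h0, _⟩ | ⟨h1v, _⟩
    · have ht : Φ u = sSup (Φ '' S) := by
        apply le_antisymm ht1
        rw [heq]; exact ht2
      exact hωgen n (Φ u) (hmemN _ ht) hΦu.symm
    · exact hωgen n 0 (by rw [hN]; left; rfl) (by rw [← hΦu, h0])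
    · refine hωgen n 0 (by rw [hN]; left; rfl) ?_
      rw [← hΦu, h1v]
      exact h10
  -- uniqueness
  have huniq : ∀ x ∈ X, ∀ y ∈ X, Φ x = ω → Φ y = ω → x = y := by
    intro x hx y hy hΦx hΦy
    by_contra hne
    by_cases hsame : ∀ n : ℕ, ⌊d * rep (T^[n] x)⌋ = ⌊d * rep (T^[n] y)⌋
    · -- all digits equal ⇒ distance grows like d^n, contradiction
      have hgrow : ∀ n : ℕ, rep (T^[n] x) - rep (T^[n] y)
          = d ^ n * (rep x - rep y) := by
        intro n
        induction n with
        | zero => simp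
        | succ n ih =>
          rw [Function.iterate_succ_apply', Function.iterate_succ_apply']
          rw [hTdef, hTdef, rep_nsmul, rep_nsmul]
          rw [Int.fract, Int.fract, hsame n]
          push_cast
          ring_nf
          ring_nf at ih
          nlinarith [ih]
      have hδ : rep x - rep y ≠ 0 := by
        intro h
        exact hne (rep_inj (by linarith [sub_eq_zero.1 h]))
      have hδ' : 0 < |rep x - rep y| := abs_pos.2 hδ
      obtain ⟨n, hn⟩ := pow_unbounded_of_one_lt (R := ℝ) (1 / |rep x - rep y|)
        (by exact_mod_cast hd : (1:ℝ) < d)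
      have h1 : |rep (T^[n] x) - rep (T^[n] y)| < 1 := by
        have hx1 := rep_mem (T^[n] x); have hy1 := rep_mem (T^[n] y)
        rw [abs_lt]; constructor <;> [linarith [hx1.1, hx1.2, hy1.1, hy1.2];
          linarith [hx1.1, hx1.2, hy1.1, hy1.2]]
      rw [hgrow n, abs_mul, abs_pow] at h1
      have : (1:ℝ) / |rep x - rep y| < d ^ n := hn
      have hd1 : |(d:ℝ)| = d := abs_of_pos hd0
      rw [hd1] at h1
      rw [div_lt_iff₀ hδ'] at this
      linarith
    · push_neg at hsame
      obtain ⟨n, hn⟩ := hsame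
      rcases lt_or_gt_of_ne hn with h | h
      · exact hsep n (T^[n] x) (hiter x hx n) (T^[n] y) (hiter y hy n)
          (horb x hx hΦx n) (horb y hy hΦy n) h
      · exact hsep n (T^[n] y) (hiter y hy n) (T^[n] x) (hiter x hx n)
          (horb y hy hΦy n) (horb x hx hΦx n) h
  -- existence
  have : ω ∈ Φ '' X := by rw [hΦsurj]; exact hω
  obtain ⟨a, haX, haΦ⟩ := this
  refine ⟨a, ?_⟩
  ext z
  simp only [Set.mem_setOf_eq, Set.mem_singleton_iff]
  constructor
  · rintro ⟨hzX, hzΦ⟩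
    exact huniq z hzX a haX hzΦ haΦ
  · rintro rfl
    exact ⟨haX, haΦ⟩
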